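/- Let p be an orthogonal partition of 2n+1, with p_1 and n* as defined. Then [p_1 p_1 (2n*)]^{Sp_{2n}} ≤ ((p^t)^-)_{Sp_{2n}} in the dominance order on partitions of 2n. (Proposition 4.4 of the paper for G_n = Sp_{2n}, where η_{so_{2n+1},sp_{2n}}(p) = ((p^t)^-)_{Sp_{2n}}.) -/

import Mathlib

/-!  Basic combinatorics of partitions: transpose, dominance order,
symplectic/orthogonal partitions, collapses and expansions, and the
dimension formulas for nilpotent orbits. -/

/-- `p` is a partition of `N`: a multiset of positive integers summing to `N`. -/
def IsPartitionOf (N : ℕ) (p : Multiset ℕ) : Prop := p.sum = N ∧ 0 ∉ p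

/-- Sum of the `k` largest parts of `p`:
`Σ_{j ≥ 1} min k #{i : p_i ≥ j}`. -/
def psum (p : Multiset ℕ) (k : ℕ) : ℕ :=
  ((Multiset.range p.sum).map (fun j => min k (p.countP (fun a => j + 1 ≤ a)))).sum

/-- Dominance order on partitions: `DomLE p q` means `p ≤ q`, i.e. for every `k`
the sum of the `k` largest parts of `p` is at most that of `q`. -/
def DomLE (p q : Multiset ℕ) : Prop := ∀ k, psum p k ≤ psum q k

/-- The transpose of a partition: its `j`-th part is `#{i : p_i ≥ j}`. -/
def transpose (p : Multiset ℕ) : Multiset ℕ :=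
  (((Multiset.range p.sum).map (fun j => p.countP (fun a => j + 1 ≤ a))).filter (0 < ·))

/-- A partition is symplectic if every odd part occurs with even multiplicity. -/
def IsSymplectic (p : Multiset ℕ) : Prop := ∀ a, Odd a → Even (p.count a)

/-- A partition is orthogonal if every even part occurs with even multiplicity. -/
def IsOrthogonal (p : Multiset ℕ) : Prop := ∀ a, Even a → Even (p.count a)

/-- `q` is the `P`-collapse of `p` (as partitions of `N`): the largest partition of `N`
satisfying `P` which is `≤ p` in the dominance order. -/
def IsCollapseOf (P : Multiset ℕ → Prop) (N : ℕ) (p q : Multiset ℕ) : Prop :=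
  IsPartitionOf N q ∧ P q ∧ DomLE q p ∧
    ∀ q', IsPartitionOf N q' → P q' → DomLE q' p → DomLE q' q

open Classical in
noncomputable def collapseOf (P : Multiset ℕ → Prop) (N : ℕ) (p : Multiset ℕ) : Multiset ℕ :=
  if h : ∃ q, IsCollapseOf P N p q then h.choose else 0

/-- The symplectic collapse `p_{Sp_N}` of a partition `p` of `N` (`N` even). -/
noncomputable def sympCollapse (N : ℕ) (p : Multiset ℕ) : Multiset ℕ :=
  collapseOf IsSymplectic N p

/-- The orthogonal collapse `p_{SO_N}` of a partition `p` of `N`. -/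
noncomputable def orthCollapse (N : ℕ) (p : Multiset ℕ) : Multiset ℕ :=
  collapseOf IsOrthogonal N p

/-- A symplectic partition `p` of `N` is special if `(((p^t)_{Sp_N})^t)_{Sp_N} = p`. -/
def IsSpecialSymp (N : ℕ) (p : Multiset ℕ) : Prop :=
  sympCollapse N (transpose (sympCollapse N (transpose p))) = p

/-- An orthogonal partition `p` of `N` is special if `(((p^t)_{SO_N})^t)_{SO_N} = p`. -/
def IsSpecialOrth (N : ℕ) (p : Multiset ℕ) : Prop :=
  orthCollapse N (transpose (orthCollapse N (transpose p))) = p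

/-- `q` is the `(P, Sp)`-expansion of `p`: the smallest partition of `N` satisfying
`P` and the speciality predicate `Sp` which is `≥ p` in the dominance order. -/
def IsExpansionOf (P Sp : Multiset ℕ → Prop) (N : ℕ) (p q : Multiset ℕ) : Prop :=
  IsPartitionOf N q ∧ P q ∧ Sp q ∧ DomLE p q ∧
    ∀ q', IsPartitionOf N q' → P q' → Sp q' → DomLE p q' → DomLE q q'

open Classical in
noncomputable def expansionOf (P Sp : Multiset ℕ → Prop) (N : ℕ) (p : Multiset ℕ) :
    Multiset ℕ :=
  if h : ∃ q, IsExpansionOf P Sp N p q then h.choose else 0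

/-- The symplectic expansion `p^{Sp_N}`: the smallest special symplectic partition of `N`
which is `≥ p` in the dominance order. -/
noncomputable def sympExpansion (N : ℕ) (p : Multiset ℕ) : Multiset ℕ :=
  expansionOf IsSymplectic (IsSpecialSymp N) N p

/-- The orthogonal expansion `p^{SO_N}`: the smallest special orthogonal partition of `N`
which is `≥ p` in the dominance order. -/
noncomputable def orthExpansion (N : ℕ) (p : Multiset ℕ) : Multiset ℕ :=
  expansionOf IsOrthogonal (IsSpecialOrth N) N p

/-- The smallest part of a (nonempty) partition. -/
def minPart (p : Multiset ℕ) : ℕ := p.sum - psum p (Multiset.card p - 1)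

/-- The largest part of a partition. -/
def maxPart (p : Multiset ℕ) : ℕ := psum p 1

/-- `p^-`: decrease the smallest part of `p` by `1` (deleting it if it becomes `0`). -/
def pMinus (p : Multiset ℕ) : Multiset ℕ :=
  ((minPart p - 1) ::ₘ p.erase (minPart p)).filter (0 < ·)

/-- `p^+`: increase the largest part of `p` by `1`. -/
def pPlus (p : Multiset ℕ) : Multiset ℕ :=
  (maxPart p + 1) ::ₘ p.erase (maxPart p)

/-- `dim_{sp_{2n}}(p) = 2n² + n − ½(Σ_i ((p^t)_i)² + #{i : p_i odd})`,
the dimension of the nilpotent orbit of `sp_{2n}` attached to a symplectic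
partition `p` of `2n`. -/
def dimSp (n : ℕ) (p : Multiset ℕ) : ℚ :=
  (2 * (n : ℚ) ^ 2 + n) -
    (((transpose p).map (fun x => (x : ℚ) ^ 2)).sum + (p.countP (Odd ·) : ℚ)) / 2

/-- `dim_{so_m}(p) = m(m−1)/2 − ½(Σ_i ((p^t)_i)² − #{i : p_i odd})`,
the dimension of the nilpotent orbit of `so_m` attached to an orthogonal
partition `p` of `m`. -/
def dimSO (m : ℕ) (p : Multiset ℕ) : ℚ :=
  ((m : ℚ) * ((m : ℚ) - 1)) / 2 -
    (((transpose p).map (fun x => (x : ℚ) ^ 2)).sum - (p.countP (Odd ·) : ℚ)) / 2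

/-- The partition `p_1 = [⌊b_1/2⌋^{a_1} ⋯ ⌊b_r/2⌋^{a_r}]^t` attached to
`p = [b_1^{a_1} ⋯ b_r^{a_r}]` (zero entries discarded). -/
def pOne (p : Multiset ℕ) : Multiset ℕ := transpose (p.map (· / 2))

/-- `n* = ⌊(Σ_{i : b_i odd} a_i)/2⌋`, i.e. half the number of odd parts. -/
def nStar (p : Multiset ℕ) : ℕ := p.countP (Odd ·) / 2

/-- `[q q (m)]`: two copies of `q` together with one extra part `m`
(no extra part when `m = 0`). -/
def qqm (q : Multiset ℕ) (m : ℕ) : Multiset ℕ :=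
  if m = 0 then q + q else m ::ₘ (q + q)



/-! ### Auxiliary theory -/

namespace PartitionAux

open Finset

/-- Column function: number of parts of `p` that are `≥ j+1`. -/
def colF (p : Multiset ℕ) (j : ℕ) : ℕ := p.countP (fun a => j + 1 ≤ a)

/-- Row function: the `i`-th largest part of `p` (0-indexed). -/
def rowF (p : Multiset ℕ) (i : ℕ) : ℕ :=
  ((Finset.range p.sum).filter (fun j => i + 1 ≤ colF p j)).card

lemma mem_le_sum {p : Multiset ℕ} {a : ℕ} (h : a ∈ p) : a ≤ p.sum :=
  Multiset.single_le_sum (fun x _ => Nat.zero_le x) a h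

lemma colF_antitone (p : Multiset ℕ) {j j' : ℕ} (h : j ≤ j') : colF p j' ≤ colF p j := by
  induction p using Multiset.induction with
  | empty => simp [colF]
  | cons a s ih =>
    simp only [colF, Multiset.countP_cons] at *
    by_cases h1 : j + 1 ≤ a <;> by_cases h2 : j' + 1 ≤ a <;> simp only [h1, h2, ↓reduceIte] <;> omega

lemma colF_le_card (p : Multiset ℕ) (j : ℕ) : colF p j ≤ Multiset.card p :=
  Multiset.countP_le_card _ _

lemma colF_lt_sum {p : Multiset ℕ} {j : ℕ} (h : 1 ≤ colF p j) : j < p.sum := by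
  have : ∃ a ∈ p, j + 1 ≤ a := by
    by_contra hc
    push_neg at hc
    have : colF p j = 0 := by
      apply Multiset.countP_eq_zero.2
      intro a ha hja
      exact absurd hja (by have := hc a ha; omega)
    omega
  obtain ⟨a, ha, hja⟩ := this
  have := mem_le_sum ha
  omega

lemma colF_eq_zero {p : Multiset ℕ} {j : ℕ} (h : p.sum ≤ j) : colF p j = 0 := by
  by_contra hc
  have := colF_lt_sum (p := p) (j := j) (by omega)
  omega

lemma colF_le_sum (p : Multiset ℕ) (j : ℕ) : colF p j ≤ p.sum := by
  induction p using Multiset.induction with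
  | empty => simp [colF]
  | cons a s ih =>
    simp only [colF, Multiset.countP_cons, Multiset.sum_cons] at *
    by_cases h : j + 1 ≤ a <;> simp only [h, ↓reduceIte] <;> omega

/-- Main counting helper: cardinality of a down-closed subset of `range n`. -/
lemma card_filter_downset {P : ℕ → Prop} [DecidablePred P] {n j : ℕ}
    (hdown : ∀ a b : ℕ, a ≤ b → P b → P a) (hn : ∀ a, P a → a < n) :
    (j + 1 ≤ ((Finset.range n).filter P).card ↔ P j) := by
  constructor
  · intro h
    by_contra hPj
    have hsub : (Finset.range n).filter P ⊆ Finset.range j := by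
      intro a ha
      simp only [Finset.mem_filter, Finset.mem_range] at ha ⊢
      by_contra hja
      exact hPj (hdown j a (by omega) ha.2)
    have := Finset.card_le_card hsub
    simp [Finset.card_range] at this
    omega
  · intro h
    have hsub : Finset.range (j + 1) ⊆ (Finset.range n).filter P := by
      intro a ha
      simp only [Finset.mem_range] at ha
      simp only [Finset.mem_filter, Finset.mem_range]
      have hPa : P a := hdown a j (by omega) h
      exact ⟨hn a hPa, hPa⟩
    have := Finset.card_le_card hsub
    simpa [Finset.card_range] using this

/-- The fundamental adjunction between rows and columns. -/
lemma adj (p : Multiset ℕ) (i j : ℕ) : i + 1 ≤ colF p j ↔ j + 1 ≤ rowF p i := by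
  rw [rowF]
  rw [card_filter_downset (P := fun j => i + 1 ≤ colF p j)
    (fun a b hab hPb => le_trans hPb (colF_antitone p hab))
    (fun a hPa => colF_lt_sum (le_trans (by omega) hPa))]

lemma rowF_le_sum (p : Multiset ℕ) (i : ℕ) : rowF p i ≤ p.sum := by
  have := Finset.card_le_card
    (Finset.filter_subset (fun j => i + 1 ≤ colF p j) (Finset.range p.sum))
  simpa [rowF, Finset.card_range] using this

lemma rowF_antitone (p : Multiset ℕ) {i i' : ℕ} (h : i ≤ i') : rowF p i' ≤ rowF p i := by
  apply Finset.card_le_card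
  intro j hj
  simp only [Finset.mem_filter, Finset.mem_range] at hj ⊢
  exact ⟨hj.1, by omega⟩

lemma rowF_eq_zero {p : Multiset ℕ} {i : ℕ} (h : Multiset.card p ≤ i) : rowF p i = 0 := by
  rw [rowF, Finset.card_eq_zero, Finset.filter_eq_empty_iff]
  intro j _
  have := colF_le_card p j
  omega

lemma rowF_pos {p : Multiset ℕ} (h0 : 0 ∉ p) {i : ℕ} (h : i < Multiset.card p) :
    1 ≤ rowF p i := by
  have hcard : colF p 0 = Multiset.card p := by
    apply Multiset.countP_eq_card.2
    intro a ha
    rcases Nat.eq_zero_or_pos a with h'|h'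
    · exact absurd (h' ▸ ha) h0
    · omega
  have := (adj p i 0).mp (by omega)
  omega

lemma min_card_filter (c B : ℕ) :
    ((Finset.range B).filter (fun i => i + 1 ≤ c)).card = min B c := by
  have : (Finset.range B).filter (fun i => i + 1 ≤ c) = Finset.range (min B c) := by
    ext i
    simp only [Finset.mem_filter, Finset.mem_range, lt_min_iff]
    omega
  rw [this, Finset.card_range]

lemma psum_eq_sum_min (p : Multiset ℕ) (k : ℕ) :
    psum p k = ∑ j ∈ Finset.range p.sum, min k (colF p j) := rfl

lemma psum_eq_sum_min_ext (p : Multiset ℕ) (k B : ℕ) (hB : p.sum ≤ B) :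
    psum p k = ∑ j ∈ Finset.range B, min k (colF p j) := by
  rw [psum_eq_sum_min]
  apply Finset.sum_subset
  · exact Finset.range_subset_range.2 hB
  · intro j _ hj
    simp only [Finset.mem_range, not_lt] at hj
    rw [colF_eq_zero hj]
    simp

lemma psum_eq_sum_rowF (p : Multiset ℕ) (k : ℕ) :
    psum p k = ∑ i ∈ Finset.range k, rowF p i := by
  rw [psum_eq_sum_min]
  have : ∀ j, min k (colF p j) =
      ∑ i ∈ Finset.range k, (if i + 1 ≤ colF p j then 1 else 0) := by
    intro j
    rw [← Finset.card_filter, min_card_filter (colF p j) k]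
  simp only [this]
  rw [Finset.sum_comm]
  apply Finset.sum_congr rfl
  intro i _
  rw [rowF, Finset.card_filter]

lemma psum_succ (p : Multiset ℕ) (k : ℕ) : psum p (k + 1) = psum p k + rowF p k := by
  rw [psum_eq_sum_rowF, psum_eq_sum_rowF, Finset.sum_range_succ]

lemma psum_zero' (p : Multiset ℕ) : psum p 0 = 0 := by
  rw [psum_eq_sum_rowF]; simp

lemma sum_colF (p : Multiset ℕ) (B : ℕ) (hB : p.sum ≤ B) :
    ∑ j ∈ Finset.range B, colF p j = p.sum := by
  induction p using Multiset.induction with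
  | empty => simp [colF]
  | cons a s ih =>
    rw [Multiset.sum_cons] at hB
    have hs : s.sum ≤ B := by omega
    have ha : a ≤ B := by omega
    simp only [colF, Multiset.countP_cons]
    rw [Finset.sum_add_distrib]
    have h1 : ∑ j ∈ Finset.range B, Multiset.countP (fun x => j + 1 ≤ x) s = s.sum := ih hs
    have h2 : ∑ j ∈ Finset.range B, (if j + 1 ≤ a then 1 else 0) = a := by
      rw [← Finset.card_filter, min_card_filter]
      omega
    rw [h1, h2, Multiset.sum_cons]
    omega

lemma psum_stab (p : Multiset ℕ) {k : ℕ} (h : Multiset.card p ≤ k) : psum p k = p.sum := by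
  rw [psum_eq_sum_min]
  have : ∀ j ∈ Finset.range p.sum, min k (colF p j) = colF p j := by
    intro j _
    have := colF_le_card p j
    omega
  rw [Finset.sum_congr rfl this, sum_colF p p.sum le_rfl]

lemma colF_succ (p : Multiset ℕ) (j : ℕ) :
    colF p j = p.count (j + 1) + colF p (j + 1) := by
  induction p using Multiset.induction with
  | empty => simp [colF]
  | cons a s ih =>
    simp only [colF, Multiset.countP_cons, Multiset.count_cons] at *
    by_cases h3 : j + 1 = a
    · rw [if_pos (show j + 1 ≤ a by omega), if_pos h3,
        if_neg (show ¬ (j + 1 + 1 ≤ a) by omega)]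
      omega
    · by_cases h1 : j + 1 ≤ a
      · rw [if_pos h1, if_neg h3, if_pos (show j + 1 + 1 ≤ a by omega)]
        omega
      · rw [if_neg h1, if_neg h3, if_neg (show ¬ (j + 1 + 1 ≤ a) by omega)]
        omega


/-! ### Transpose -/

lemma countP_range (P : ℕ → Prop) [DecidablePred P] (n : ℕ) :
    Multiset.countP P (Multiset.range n) = ((Finset.range n).filter P).card := by
  rw [Multiset.countP_eq_card_filter]
  rfl

lemma sum_filter_pos (m : Multiset ℕ) : (m.filter (0 < ·)).sum = m.sum := by
  conv_rhs => rw [← Multiset.filter_add_not (0 < ·) m]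
  rw [Multiset.sum_add]
  have : (m.filter (fun a => ¬ 0 < a)).sum = 0 := by
    apply Multiset.sum_eq_zero
    intro x hx
    have := Multiset.of_mem_filter hx
    omega
  omega

lemma countP_filter_pos (m : Multiset ℕ) (j : ℕ) :
    Multiset.countP (fun a => j + 1 ≤ a) (m.filter (0 < ·)) =
      Multiset.countP (fun a => j + 1 ≤ a) m := by
  induction m using Multiset.induction with
  | empty => simp
  | cons a s ih =>
    by_cases h : 0 < a
    · rw [Multiset.filter_cons_of_pos _ h, Multiset.countP_cons, Multiset.countP_cons, ih]
    · rw [Multiset.filter_cons_of_neg _ h, Multiset.countP_cons, ih,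
        if_neg (by omega)]
      omega

lemma transpose_def (p : Multiset ℕ) :
    transpose p = ((Multiset.range p.sum).map (colF p)).filter (0 < ·) := rfl

lemma zero_not_mem_transpose (p : Multiset ℕ) : 0 ∉ transpose p := by
  intro h
  have := Multiset.of_mem_filter h
  omega

lemma sum_transpose (p : Multiset ℕ) : (transpose p).sum = p.sum := by
  rw [transpose_def, sum_filter_pos]
  rw [show ((Multiset.range p.sum).map (colF p)).sum
      = ∑ j ∈ Finset.range p.sum, colF p j from rfl]
  exact sum_colF p p.sum le_rfl

lemma colF_transpose (p : Multiset ℕ) (i : ℕ) : colF (transpose p) i = rowF p i := by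
  rw [transpose_def, colF, countP_filter_pos, Multiset.countP_map, rowF]
  rw [show Multiset.card (Multiset.filter (fun a => i + 1 ≤ colF p a) (Multiset.range p.sum))
      = Multiset.countP (fun a => i + 1 ≤ colF p a) (Multiset.range p.sum) by
    rw [Multiset.countP_eq_card_filter]]
  rw [countP_range]

lemma rowF_transpose (p : Multiset ℕ) (i : ℕ) : rowF (transpose p) i = colF p i := by
  rw [rowF, sum_transpose]
  have he : (Finset.range p.sum).filter (fun j => i + 1 ≤ colF (transpose p) j)
      = (Finset.range p.sum).filter (fun j => j + 1 ≤ colF p i) := by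
    apply Finset.filter_congr
    intro j _
    simp only [colF_transpose]
    exact (adj p j i).symm  -- i' + 1 ≤ colF p j' ↔ j' + 1 ≤ rowF p i'
  rw [he]
  have : (Finset.range p.sum).filter (fun j => j + 1 ≤ colF p i)
      = (Finset.range p.sum).filter (fun j => j + 1 ≤ colF p i) := rfl
  rw [min_card_filter (colF p i) p.sum]
  have := colF_le_sum p i
  omega

lemma count_transpose (p : Multiset ℕ) (j : ℕ) :
    (transpose p).count (j + 1) + rowF p (j + 1) = rowF p j := by
  have h := colF_succ (transpose p) j
  rw [colF_transpose, colF_transpose] at h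
  omega

lemma transpose_transpose {p : Multiset ℕ} (h0 : 0 ∉ p) :
    transpose (transpose p) = p := by
  ext a
  rcases Nat.eq_zero_or_pos a with rfl|ha
  · rw [Multiset.count_eq_zero_of_notMem (zero_not_mem_transpose _),
      Multiset.count_eq_zero_of_notMem h0]
  · obtain ⟨j, rfl⟩ : ∃ j, a = j + 1 := ⟨a - 1, by omega⟩
    have h1 := count_transpose (transpose p) j
    rw [rowF_transpose, rowF_transpose] at h1
    have h2 := colF_succ p j
    omega

/-! ### Partitions built from an antitone row function -/

/-- The partition with parts `g 0 ≥ g 1 ≥ ⋯ ≥ g (L-1)` (zero parts discarded). -/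
def mkPart (g : ℕ → ℕ) (L : ℕ) : Multiset ℕ :=
  ((Multiset.range L).map g).filter (0 < ·)

lemma zero_not_mem_mkPart (g : ℕ → ℕ) (L : ℕ) : 0 ∉ mkPart g L := by
  intro h
  have := Multiset.of_mem_filter h
  omega

lemma sum_mkPart (g : ℕ → ℕ) (L : ℕ) : (mkPart g L).sum = ∑ i ∈ Finset.range L, g i := by
  rw [mkPart, sum_filter_pos]
  rfl

lemma colF_mkPart (g : ℕ → ℕ) (L j : ℕ) :
    colF (mkPart g L) j = ((Finset.range L).filter (fun i => j + 1 ≤ g i)).card := by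
  rw [mkPart, colF, countP_filter_pos, Multiset.countP_map]
  rw [show Multiset.card (Multiset.filter (fun a => j + 1 ≤ g a) (Multiset.range L))
      = Multiset.countP (fun a => j + 1 ≤ g a) (Multiset.range L) by
    rw [Multiset.countP_eq_card_filter]]
  rw [countP_range]

lemma rowF_mkPart {g : ℕ → ℕ} {L : ℕ} (hg : ∀ {a b : ℕ}, a ≤ b → g b ≤ g a)
    (hL : ∀ i, L ≤ i → g i = 0) (i : ℕ) : rowF (mkPart g L) i = g i := by
  have hgs : ∀ i', g i' ≤ (mkPart g L).sum := by
    intro i'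
    rcases Nat.lt_or_ge i' L with h|h
    · rw [sum_mkPart]
      exact Finset.single_le_sum (fun x _ => Nat.zero_le (g x)) (Finset.mem_range.2 h)
    · rw [hL i' h]; exact Nat.zero_le _
  rw [rowF]
  have he : (Finset.range (mkPart g L).sum).filter (fun j => i + 1 ≤ colF (mkPart g L) j)
      = (Finset.range (mkPart g L).sum).filter (fun j => j + 1 ≤ g i) := by
    apply Finset.filter_congr
    intro j _
    rw [colF_mkPart]
    rw [card_filter_downset (P := fun i' => j + 1 ≤ g i')
      (fun a b hab hPb => le_trans hPb (hg hab))
      (fun a hPa => by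
        by_contra hc
        have := hL a (by omega)
        omega)]
  rw [he, min_card_filter (g i) ((mkPart g L).sum)]
  have := hgs i
  omega

lemma psum_mkPart {g : ℕ → ℕ} {L : ℕ} (hg : ∀ {a b : ℕ}, a ≤ b → g b ≤ g a)
    (hL : ∀ i, L ≤ i → g i = 0) (k : ℕ) :
    psum (mkPart g L) k = ∑ i ∈ Finset.range k, g i := by
  rw [psum_eq_sum_rowF]
  exact Finset.sum_congr rfl (fun i _ => rowF_mkPart hg hL i)


/-! ### Dominance order basics -/

lemma psum_zero_part (k : ℕ) : psum (0 : Multiset ℕ) k = 0 := rfl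

lemma domLE_refl (p : Multiset ℕ) : DomLE p p := fun _ => le_rfl

lemma domLE_trans {p q r : Multiset ℕ} (h1 : DomLE p q) (h2 : DomLE q r) : DomLE p r :=
  fun k => le_trans (h1 k) (h2 k)

lemma colF_le_of_rowF_le {p q : Multiset ℕ} (h : ∀ i, rowF p i ≤ rowF q i) (j : ℕ) :
    colF p j ≤ colF q j := by
  rcases Nat.eq_zero_or_pos (colF p j) with h0|h0
  · omega
  · have h1 : (colF p j - 1) + 1 ≤ colF p j := by omega
    have h2 := (adj p (colF p j - 1) j).mp h1
    have h3 := le_trans h2 (h (colF p j - 1))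
    have h4 := (adj q (colF p j - 1) j).mpr h3
    omega

lemma domLE_antisymm {p q : Multiset ℕ} (hp : 0 ∉ p) (hq : 0 ∉ q)
    (h1 : DomLE p q) (h2 : DomLE q p) : p = q := by
  have hpsum : ∀ k, psum p k = psum q k := fun k => le_antisymm (h1 k) (h2 k)
  have hrow : ∀ i, rowF p i = rowF q i := by
    intro i
    have e1 := psum_succ p i
    have e2 := psum_succ q i
    have := hpsum i
    have := hpsum (i + 1)
    omega
  have hcol : ∀ j, colF p j = colF q j := fun j =>
    le_antisymm (colF_le_of_rowF_le (fun i => (hrow i).le) j)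
      (colF_le_of_rowF_le (fun i => (hrow i).ge) j)
  ext a
  rcases Nat.eq_zero_or_pos a with rfl|ha
  · rw [Multiset.count_eq_zero_of_notMem hp, Multiset.count_eq_zero_of_notMem hq]
  · obtain ⟨j, rfl⟩ : ∃ j, a = j + 1 := ⟨a - 1, by omega⟩
    have e1 := colF_succ p j
    have e2 := colF_succ q j
    have := hcol j
    have := hcol (j + 1)
    omega

lemma psum_singleton_le (m k : ℕ) : psum ({m} : Multiset ℕ) k ≤ m := by
  rw [psum_eq_sum_min]
  calc ∑ j ∈ Finset.range ({m} : Multiset ℕ).sum, min k (colF {m} j)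
      ≤ ∑ j ∈ Finset.range ({m} : Multiset ℕ).sum, 1 := by
        apply Finset.sum_le_sum
        intro j _
        have h1 : colF ({m} : Multiset ℕ) j ≤ 1 := by
          have := colF_le_card ({m} : Multiset ℕ) j
          simpa using this
        omega
    _ = m := by simp

lemma psum_mono_k (p : Multiset ℕ) {k k' : ℕ} (h : k ≤ k') : psum p k ≤ psum p k' := by
  rw [psum_eq_sum_rowF, psum_eq_sum_rowF]
  apply Finset.sum_le_sum_of_subset
  exact Finset.range_subset_range.2 h

lemma sum_colF_eq_map_min (q : Multiset ℕ) (k : ℕ) :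
    ∑ j ∈ Finset.range k, colF q j = (q.map (fun a => min a k)).sum := by
  induction q using Multiset.induction with
  | empty => simp [colF]
  | cons a s ih =>
    simp only [colF, Multiset.countP_cons, Multiset.map_cons, Multiset.sum_cons]
    rw [Finset.sum_add_distrib]
    simp only [colF] at ih
    rw [ih]
    have h2 : ∑ j ∈ Finset.range k, (if j + 1 ≤ a then 1 else 0) = min a k := by
      rw [← Finset.card_filter, min_card_filter]
      omega
    rw [h2]
    omega

lemma sum_min_transpose (q : Multiset ℕ) (k : ℕ) :
    psum (transpose q) k = (q.map (fun a => min a k)).sum := by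
  rw [psum_eq_sum_rowF]
  have : ∀ i ∈ Finset.range k, rowF (transpose q) i = colF q i :=
    fun i _ => rowF_transpose q i
  rw [Finset.sum_congr rfl this]
  exact sum_colF_eq_map_min q k

/-! ### Characterisation of symplectic partitions via partial sums -/

lemma psum_const_run (q : Multiset ℕ) (v a b : ℕ) (hab : a ≤ b)
    (hc : ∀ i, a ≤ i → i < b → rowF q i = v) :
    psum q b = psum q a + (b - a) * v := by
  induction b, hab using Nat.le_induction with
  | base => simp
  | succ b hab ih =>
    rw [psum_succ, ih (fun i h1 h2 => hc i h1 (by omega)), hc b hab (by omega)]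
    have h1 : b + 1 - a = (b - a) + 1 := by omega
    rw [h1, Nat.succ_mul]
    ring

lemma rowF_between {q : Multiset ℕ} {v i : ℕ} (hv : 1 ≤ v)
    (h1 : colF q v ≤ i) (h2 : i < colF q (v - 1)) : rowF q i = v := by
  have ha : v ≤ rowF q i := by
    have := (adj q i (v - 1)).mp (by omega)
    omega
  have hb : ¬ (v + 1 ≤ rowF q i) := by
    intro hc
    have := (adj q i v).mpr (by omega)
    omega
  omega

lemma psum_eventually (q : Multiset ℕ) {k : ℕ} (h : rowF q k = 0) : psum q k = q.sum := by
  have hB : psum q (max (Multiset.card q) k) = q.sum := psum_stab q (le_max_left _ _)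
  rcases Nat.le_total (Multiset.card q) k with hk|hk
  · rw [psum_stab q hk]
  · have : psum q (max (Multiset.card q) k) = psum q k := by
      rw [max_eq_left hk]
      rw [psum_const_run q 0 k (Multiset.card q) hk
        (fun i hi _ => by
          have := rowF_antitone q hi
          omega)]
      omega
    omega

lemma sympChar_mp {q : Multiset ℕ} (hsym : IsSymplectic q) (hev : Even q.sum) :
    ∀ k, Odd (psum q k) → rowF q (k - 1) = rowF q k ∧ Odd (rowF q k) := by
  intro k
  induction k using Nat.strong_induction_on with
  | _ k IH =>
    intro hodd
    match k, hodd with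
    | 0, hodd => rw [psum_zero'] at hodd; exact absurd hodd (by simp)
    | (k' + 1), hodd =>
      set v := rowF q k' with hv
      rcases Nat.eq_zero_or_pos v with hv0|hv0
      · exfalso
        have : psum q (k' + 1) = q.sum := psum_eventually q (by
          have := rowF_antitone q (show k' ≤ k' + 1 by omega)
          omega)
        rw [this] at hodd
        exact (Nat.not_odd_iff_even.mpr hev) hodd
      · set k₀ := colF q v with hk₀
        have hk₀le : k₀ ≤ k' := by
          by_contra hc
          have := (adj q k' v).mp (by omega)
          omega
        have hrun : ∀ i, k₀ ≤ i → i < k' + 1 → rowF q i = v := by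
          intro i hi1 hi2
          have ha : v ≤ rowF q i := le_trans (le_of_eq hv) (rowF_antitone q (by omega))
          have hb : ¬ (v + 1 ≤ rowF q i) := by
            intro hc
            have := (adj q i v).mpr (by omega)
            omega
          omega
        have hps : psum q (k' + 1) = psum q k₀ + (k' + 1 - k₀) * v :=
          psum_const_run q v k₀ (k' + 1) (by omega) hrun
        have hpe : Even (psum q k₀) := by
          by_contra hc
          have hodd₀ : Odd (psum q k₀) := Nat.not_even_iff_odd.mp hc
          have hk₀pos : 1 ≤ k₀ := by
            rcases Nat.eq_zero_or_pos k₀ with h|h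
            · rw [h, psum_zero'] at hodd₀; exact absurd hodd₀ (by simp)
            · exact h
          obtain ⟨heq, _⟩ := IH k₀ (by omega) hodd₀
          have h1 : v + 1 ≤ rowF q (k₀ - 1) := by
            have := (adj q (k₀ - 1) v).mp (by omega)
            omega
          have h2 : ¬ (v + 1 ≤ rowF q k₀) := by
            intro hc2
            have := (adj q k₀ v).mpr (by omega)
            omega
          omega
        have hoddv : Odd v ∧ Odd (k' + 1 - k₀) := by
          rw [← Nat.odd_mul, mul_comm]
          rcases Nat.even_or_odd ((k' + 1 - k₀) * v) with hev'|hov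
          · exfalso
            rw [hps] at hodd
            exact (Nat.not_odd_iff_even.mpr (hpe.add hev')) hodd
          · exact hov
        have hcount : Even (q.count v) := hsym v hoddv.1
        have hk₁ : colF q (v - 1) = q.count v + colF q v := by
          have := colF_succ q (v - 1)
          rw [show v - 1 + 1 = v by omega] at this
          exact this
        have hk'le : k' + 1 ≤ colF q (v - 1) := by
          have := (adj q k' (v - 1)).mpr (by omega)
          omega
        have hklt : k' + 1 < colF q (v - 1) := by
          rcases hcount with ⟨x, hx⟩
          rcases hoddv.2 with ⟨y, hy⟩
          omega
        have hlast : rowF q (k' + 1) = v := rowF_between hv0 (by omega) (by omega)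
        refine ⟨?_, by rw [hlast]; exact hoddv.1⟩
        rw [show k' + 1 - 1 = k' by omega, hlast]

lemma sympChar_mpr {q : Multiset ℕ} (h0 : 0 ∉ q)
    (H : ∀ k, Odd (psum q k) → rowF q (k - 1) = rowF q k) : IsSymplectic q := by
  set M := rowF q 0 with hM
  have hpart : ∀ a, M + 1 ≤ a → q.count a = 0 := by
    intro a ha
    by_contra hc
    have h1 : 1 ≤ colF q (a - 1) := by
      have := colF_succ q (a - 1)
      rw [show a - 1 + 1 = a by omega] at this
      omega
    have := (adj q 0 (a - 1)).mp h1
    omega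
  have key : ∀ d, d ≤ M →
      ((∀ v, Odd v → M + 1 - d ≤ v → Even (q.count v)) ∧
        Even (psum q (colF q (M - d)))) := by
    intro d
    induction d with
    | zero =>
      intro _
      constructor
      · intro v hv hvge
        rw [hpart v (by omega)]
        exact Even.zero
      · have : colF q M = 0 := by
          by_contra hc
          have h2 := colF_succ q M
          rcases Nat.eq_zero_or_pos (q.count (M + 1)) with h3|h3
          · -- colF q (M+1) > 0 leads to a part > M+1
            have : 1 ≤ colF q M := by omega
            -- find some part ≥ M+1
            have hx : ∃ x ∈ q, M + 1 ≤ x := by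
              by_contra hno
              push_neg at hno
              have : colF q M = 0 := Multiset.countP_eq_zero.2 (by
                intro x hx hMx
                exact absurd hMx (by have := hno x hx; omega))
              omega
            obtain ⟨x, hxq, hxge⟩ := hx
            have : q.count x = 0 := hpart x (by omega)
            rw [Multiset.count_eq_zero] at this
            exact this hxq
          · have := hpart (M + 1) (by omega)
            omega
        rw [Nat.sub_zero, this, psum_zero']
        exact Even.zero
    | succ d ihd =>
      intro hdM
      obtain ⟨ih1, ih2⟩ := ihd (by omega)
      set a := M - d with ha
      have ha1 : 1 ≤ a := by omega
      have hMd : M - (d + 1) = a - 1 := by omega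
      have hrun : ∀ i, colF q a ≤ i → i < colF q (a - 1) → rowF q i = a :=
        fun i h1 h2 => rowF_between ha1 h1 h2
      have hstep : psum q (colF q (a - 1)) =
          psum q (colF q a) + (colF q (a - 1) - colF q a) * a := by
        apply psum_const_run q a _ _ (colF_antitone q (by omega)) hrun
      have hcnt : colF q (a - 1) = q.count a + colF q a := by
        have := colF_succ q (a - 1)
        rw [show a - 1 + 1 = a by omega] at this
        exact this
      have hMd2 : M - d = a := rfl
      have hcount_a : Odd a → Even (q.count a) := by
        intro hodd_a
        by_contra hc
        have hcoddn : Odd (q.count a) := Nat.not_even_iff_odd.mp hc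
        have hps_odd : Odd (psum q (colF q (a - 1))) := by
          rw [hstep, hcnt, show q.count a + colF q a - colF q a = q.count a by omega]
          exact ih2.add_odd (hcoddn.mul hodd_a)
        have hc1 : 1 ≤ q.count a := by
          rcases Nat.eq_zero_or_pos (q.count a) with h|h
          · rw [h] at hcoddn; exact absurd hcoddn (by simp)
          · exact h
        have hK1 : 1 ≤ colF q (a - 1) := by omega
        have heq := H (colF q (a - 1)) hps_odd
        have h1 : a ≤ rowF q (colF q (a - 1) - 1) := by
          have := (adj q (colF q (a - 1) - 1) (a - 1)).mp (by omega)
          omega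
        have h2 : ¬ (a ≤ rowF q (colF q (a - 1))) := by
          intro hc2
          have := (adj q (colF q (a - 1)) (a - 1)).mpr (by
            rw [show a - 1 + 1 = a by omega]; exact hc2)
          omega
        omega
      constructor
      · intro v hv hvge
        rcases Nat.lt_or_ge v a with h|h
        · omega
        · rcases Nat.eq_or_lt_of_le h with h'|h'
          · rw [← h']; exact hcount_a (h' ▸ hv)
          · exact ih1 v hv (by omega)
      · rw [hMd, hstep, hcnt, show q.count a + colF q a - colF q a = q.count a by omega]
        rcases Nat.even_or_odd a with hev_a|hodd_a
        · exact ih2.add (hev_a.mul_left _)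
        · exact ih2.add ((hcount_a hodd_a).mul_right _)
  intro a hodd_a
  rcases le_or_gt a M with h|h
  · have := (key (M + 1 - a) (by
      rcases Nat.eq_zero_or_pos a with h0|h0
      · exact absurd hodd_a (by simp [h0])
      · omega)).1 a hodd_a (by omega)
    exact this
  · rw [hpart a (by omega)]
    exact Even.zero


/-! ### Top-k submultisets -/

lemma sum_le_of_le {s m : Multiset ℕ} (h : s ≤ m) : s.sum ≤ m.sum := by
  obtain ⟨w, rfl⟩ := Multiset.le_iff_exists_add.1 h
  rw [Multiset.sum_add]
  omega

lemma psum_mono_multiset {s m : Multiset ℕ} (h : s ≤ m) (k : ℕ) : psum s k ≤ psum m k := by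
  have hsum : s.sum ≤ m.sum := sum_le_of_le h
  rw [psum_eq_sum_min_ext s k m.sum hsum, psum_eq_sum_min]
  apply Finset.sum_le_sum
  intro j _
  have : colF s j ≤ colF m j := Multiset.countP_le_of_le _ h
  omega

lemma sub_sum_le_psum {s m : Multiset ℕ} (h : s ≤ m) {k : ℕ} (hk : Multiset.card s ≤ k) :
    s.sum ≤ psum m k := by
  have h1 : s.sum = psum s k := (psum_stab s hk).symm
  rw [h1]
  exact psum_mono_multiset h k

lemma colF_zero_eq_card {m : Multiset ℕ} (h0 : 0 ∉ m) : colF m 0 = Multiset.card m := by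
  apply Multiset.countP_eq_card.2
  intro a ha
  rcases Nat.eq_zero_or_pos a with h'|h'
  · exact absurd (h' ▸ ha) h0
  · omega

lemma colF_filter_gt (m : Multiset ℕ) (v j : ℕ) :
    colF (m.filter (fun a => v + 1 ≤ a)) j = colF m (max j v) := by
  rw [colF, Multiset.countP_eq_card_filter, Multiset.filter_filter, colF,
    Multiset.countP_eq_card_filter]
  congr 1
  apply Multiset.filter_congr
  intro a _
  constructor
  · rintro ⟨h1, h2⟩; omega
  · intro h; omega

lemma sum_filter_gt (m : Multiset ℕ) (v : ℕ) :
    (m.filter (fun a => v + 1 ≤ a)).sum = psum m (colF m v) := by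
  set u := m.filter (fun a => v + 1 ≤ a) with hu
  have husub : u ≤ m := Multiset.filter_le _ m
  have husum : u.sum ≤ m.sum := sum_le_of_le husub
  rw [← sum_colF u m.sum husum]
  rw [psum_eq_sum_min]
  apply Finset.sum_congr rfl
  intro j _
  rw [hu, colF_filter_gt]
  rcases le_or_gt v j with h|h
  · rw [max_eq_left h]
    have : colF m j ≤ colF m v := colF_antitone m h
    omega
  · rw [max_eq_right (by omega : j ≤ v)]
    have h1 : colF m v ≤ colF m j := colF_antitone m (by omega)
    omega

lemma exists_topk (m : Multiset ℕ) (h0 : 0 ∉ m) (k : ℕ) :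
    ∃ s, s ≤ m ∧ Multiset.card s ≤ k ∧ s.sum = psum m k := by
  set v := rowF m k with hv
  set K := colF m v with hK
  set k' := min k (Multiset.card m) with hk'
  have hKk : K ≤ k := by
    by_contra hc
    have := (adj m k v).mp (by omega)
    omega
  have hKcard : K ≤ Multiset.card m := colF_le_card m v
  refine ⟨m.filter (fun a => v + 1 ≤ a) + Multiset.replicate (k' - K) v, ?_, ?_, ?_⟩
  · rw [Multiset.le_iff_count]
    intro a
    rw [Multiset.count_add, Multiset.count_filter, Multiset.count_replicate]
    by_cases hav : a = v
    · subst hav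
      rw [if_neg (by omega), if_pos rfl]
      rcases le_or_gt (Multiset.card m) k with h|h
      · have hv0 : v = 0 := hv ▸ rowF_eq_zero h
        have : k' = Multiset.card m := by omega
        rw [this, hv0]
        have : K = Multiset.card m := by rw [hK, hv0]; exact colF_zero_eq_card h0
        omega
      · have hk'k : k' = k := by omega
        have hv1 : 1 ≤ v := hv ▸ rowF_pos h0 h
        have hcnt : colF m (v - 1) = m.count v + colF m v := by
          have := colF_succ m (v - 1)
          rw [show v - 1 + 1 = v by omega] at this
          exact this
        have hcK : k ≤ colF m (v - 1) := by
          rcases Nat.eq_zero_or_pos k with h2|h2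
          · omega
          · have h1 : v ≤ rowF m (k - 1) := by
              rw [hv]
              exact rowF_antitone m (by omega)
            have := (adj m (k - 1) (v - 1)).mpr (by
              rw [show v - 1 + 1 = v by omega]; exact h1)
            omega
        omega
    · by_cases hva : v + 1 ≤ a
      · rw [if_pos hva, if_neg (fun h => hav h.symm)]
        omega
      · rw [if_neg hva, if_neg (fun h => hav h.symm)]
        omega
  · rw [Multiset.card_add, Multiset.card_replicate]
    have : Multiset.card (m.filter (fun a => v + 1 ≤ a)) = K := by
      rw [hK, colF, Multiset.countP_eq_card_filter]
    omega
  · rw [Multiset.sum_add, Multiset.sum_replicate, sum_filter_gt, smul_eq_mul, ← hK]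
    have hrun : ∀ i, K ≤ i → i < k' → rowF m i = v := by
      intro i h1 h2
      have ha : v ≤ rowF m i := by rw [hv]; exact rowF_antitone m (by omega)
      have hb : ¬ (v + 1 ≤ rowF m i) := by
        intro hc
        have := (adj m i v).mpr (by omega)
        omega
      omega
    have hKk' : K ≤ k' := by
      rcases le_or_gt (Multiset.card m) k with h|h
      · have hv0 : v = 0 := hv ▸ rowF_eq_zero h
        have : K = Multiset.card m := by rw [hK, hv0]; exact colF_zero_eq_card h0
        omega
      · omega
    have h1 : psum m k' = psum m K + (k' - K) * v := psum_const_run m v K k' hKk' hrun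
    have h2 : psum m k = psum m k' := by
      rcases le_or_gt k (Multiset.card m) with h|h
      · rw [hk', min_eq_left h]
      · rw [hk', min_eq_right (by omega), psum_stab m (by omega), psum_stab m le_rfl]
    omega

lemma decomp_le_add {s u w : Multiset ℕ} (h : s ≤ u + w) :
    ∃ s₁ s₂, s₁ ≤ u ∧ s₂ ≤ w ∧ s = s₁ + s₂ := by
  refine ⟨s ∩ u, s - s ∩ u, Multiset.inter_le_right, ?_, ?_⟩
  · rw [Multiset.le_iff_count]
    intro a
    have h1 := Multiset.le_iff_count.1 h a
    rw [Multiset.count_add] at h1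
    rw [Multiset.count_sub, Multiset.count_inter]
    omega
  · ext a
    rw [Multiset.count_add, Multiset.count_sub, Multiset.count_inter]
    have h1 := Multiset.le_iff_count.1 h a
    omega

lemma psum_balance_step (u : Multiset ℕ) {k₁ k₂ : ℕ} (h : k₂ + 2 ≤ k₁) :
    psum u k₁ + psum u k₂ ≤ psum u (k₁ - 1) + psum u (k₂ + 1) := by
  obtain ⟨k₁', rfl⟩ : ∃ k₁', k₁ = k₁' + 1 := ⟨k₁ - 1, by omega⟩
  rw [show k₁' + 1 - 1 = k₁' by omega, psum_succ, psum_succ]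
  have := rowF_antitone u (show k₂ ≤ k₁' by omega)
  omega

lemma psum_balance (u : Multiset ℕ) (k₁ k₂ : ℕ) :
    psum u k₁ + psum u k₂ ≤ psum u ((k₁ + k₂ + 1) / 2) + psum u ((k₁ + k₂) / 2) := by
  rcases le_or_gt k₂ k₁ with hle|hlt
  swap
  · have := psum_balance (u := u) k₂ k₁
    rw [show k₂ + k₁ = k₁ + k₂ by omega] at this
    omega
  · generalize hd : k₁ - k₂ = d
    induction d using Nat.strong_induction_on generalizing k₁ k₂ with
    | _ d IH =>
      rcases le_or_gt d 1 with h1|h1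
      · have e1 : k₁ = (k₁ + k₂ + 1) / 2 := by omega
        have e2 : k₂ = (k₁ + k₂) / 2 := by omega
        rw [← e1, ← e2]
      · have step := psum_balance_step u (show k₂ + 2 ≤ k₁ by omega)
        have ih := IH (d - 2) (by omega) (k₁ := k₁ - 1) (k₂ := k₂ + 1) (by omega) (by omega)
        rw [show k₁ - 1 + (k₂ + 1) = k₁ + k₂ by omega] at ih
        omega

/-! ### `pMinus` of a partition -/

lemma colF_cons (a : ℕ) (s : Multiset ℕ) (j : ℕ) :
    colF (a ::ₘ s) j = colF s j + if j + 1 ≤ a then 1 else 0 :=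
  Multiset.countP_cons _ a s

lemma card_pos_of_ne {t : Multiset ℕ} (hne : t ≠ 0) : 1 ≤ Multiset.card t :=
  Multiset.card_pos.2 hne

lemma minPart_eq_rowF {t : Multiset ℕ} (hne : t ≠ 0) :
    minPart t = rowF t (Multiset.card t - 1) := by
  have hl := card_pos_of_ne hne
  have h1 : psum t (Multiset.card t) = t.sum := psum_stab t le_rfl
  have h2 := psum_succ t (Multiset.card t - 1)
  rw [show Multiset.card t - 1 + 1 = Multiset.card t by omega] at h2
  rw [minPart]
  omega

lemma minPart_pos {t : Multiset ℕ} (h0 : 0 ∉ t) (hne : t ≠ 0) : 1 ≤ minPart t := by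
  rw [minPart_eq_rowF hne]
  exact rowF_pos h0 (by have := card_pos_of_ne hne; omega)

lemma minPart_mem {t : Multiset ℕ} (h0 : 0 ∉ t) (hne : t ≠ 0) : minPart t ∈ t := by
  set l := Multiset.card t with hl
  have hl1 := card_pos_of_ne hne
  set mp := minPart t with hmp
  have hmpr : mp = rowF t (l - 1) := minPart_eq_rowF hne
  have hmp1 : 1 ≤ mp := minPart_pos h0 hne
  have hcnt : colF t (mp - 1) = t.count mp + colF t mp := by
    have := colF_succ t (mp - 1)
    rw [show mp - 1 + 1 = mp by omega] at this
    exact this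
  have h1 : l ≤ colF t (mp - 1) := by
    have := (adj t (l - 1) (mp - 1)).mpr (by rw [show mp - 1 + 1 = mp by omega]; omega)
    omega
  have h2 : ¬ (l ≤ colF t mp) := by
    intro hc
    have := (adj t (l - 1) mp).mp (by omega)
    omega
  rw [← Multiset.count_pos]
  have := colF_le_card t mp
  omega

lemma colF_pMinus {t : Multiset ℕ} (h0 : 0 ∉ t) (hne : t ≠ 0) (j : ℕ) :
    colF (pMinus t) j + (if j + 1 = minPart t then 1 else 0) = colF t j := by
  set mp := minPart t with hmp
  have hmp1 : 1 ≤ mp := minPart_pos h0 hne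
  have hmem : mp ∈ t := minPart_mem h0 hne
  have herase : colF t j = colF (t.erase mp) j + if j + 1 ≤ mp then 1 else 0 := by
    have := colF_cons mp (t.erase mp) j
    rw [Multiset.cons_erase hmem] at this
    exact this
  have hmain : colF (pMinus t) j
      = colF (t.erase mp) j + if j + 1 ≤ mp - 1 then 1 else 0 := by
    rw [pMinus, colF, countP_filter_pos]
    exact Multiset.countP_cons _ _ _
  rw [hmain]
  by_cases h1 : j + 1 = mp
  · rw [if_pos (show j + 1 ≤ mp by omega)] at herase
    rw [if_neg (show ¬ (j + 1 ≤ mp - 1) by omega)] at hmain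
    rw [if_neg (show ¬ (j + 1 ≤ mp - 1) by omega), if_pos h1]
    omega
  · by_cases h2 : j + 1 ≤ mp - 1
    · rw [if_pos (show j + 1 ≤ mp by omega)] at herase
      rw [if_pos h2, if_neg h1]
      omega
    · rw [if_neg (show ¬ (j + 1 ≤ mp) by omega)] at herase
      rw [if_neg h2, if_neg h1]
      omega

lemma sum_pMinus {t : Multiset ℕ} (h0 : 0 ∉ t) (hne : t ≠ 0) :
    (pMinus t).sum + 1 = t.sum := by
  have hmem : minPart t ∈ t := minPart_mem h0 hne
  have hmp1 : 1 ≤ minPart t := minPart_pos h0 hne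
  have hsum : t.sum = minPart t + (t.erase (minPart t)).sum := by
    conv_lhs => rw [show t = minPart t ::ₘ t.erase (minPart t)
      from (Multiset.cons_erase hmem).symm]
    rw [Multiset.sum_cons]
  rw [pMinus, sum_filter_pos, Multiset.sum_cons]
  omega

lemma zero_not_mem_pMinus (t : Multiset ℕ) : 0 ∉ pMinus t := by
  intro h
  have := Multiset.of_mem_filter h
  omega

lemma colF_minPart_sub_one {t : Multiset ℕ} (h0 : 0 ∉ t) (hne : t ≠ 0) :
    colF t (minPart t - 1) = Multiset.card t := by
  set l := Multiset.card t with hl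
  have hl1 := card_pos_of_ne hne
  set mp := minPart t with hmp
  have hmpr : mp = rowF t (l - 1) := minPart_eq_rowF hne
  have hmp1 : 1 ≤ mp := minPart_pos h0 hne
  have h1 : l ≤ colF t (mp - 1) := by
    have := (adj t (l - 1) (mp - 1)).mpr (by rw [show mp - 1 + 1 = mp by omega]; omega)
    omega
  have := colF_le_card t (mp - 1)
  omega

lemma psum_pMinus {t : Multiset ℕ} (h0 : 0 ∉ t) (hne : t ≠ 0) (k : ℕ) :
    psum (pMinus t) k + (if Multiset.card t ≤ k then 1 else 0) = psum t k := by
  set mp := minPart t with hmp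
  have hmp1 : 1 ≤ mp := minPart_pos h0 hne
  have hmem : mp ∈ t := minPart_mem h0 hne
  have hmple : mp ≤ t.sum := mem_le_sum hmem
  have hysum : (pMinus t).sum ≤ t.sum := by have := sum_pMinus h0 hne; omega
  rw [psum_eq_sum_min_ext (pMinus t) k t.sum hysum, psum_eq_sum_min]
  have hpt : ∀ j, min k (colF t j) = min k (colF (pMinus t) j)
      + (if j = mp - 1 ∧ Multiset.card t ≤ k then 1 else 0) := by
    intro j
    have hcol := colF_pMinus h0 hne (t := t) j
    by_cases h1 : j = mp - 1
    · have h2 : j + 1 = mp := by omega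
      rw [if_pos h2] at hcol
      have h3 : colF t j = Multiset.card t := by
        rw [h1]; exact colF_minPart_sub_one h0 hne
      by_cases h4 : Multiset.card t ≤ k
      · rw [if_pos ⟨h1, h4⟩]
        omega
      · rw [if_neg (fun hc => h4 hc.2)]
        omega
    · have h2 : ¬ (j + 1 = mp) := by omega
      rw [if_neg h2] at hcol
      rw [if_neg (fun hc => h1 hc.1)]
      omega
  rw [Finset.sum_congr rfl (fun j _ => hpt j), Finset.sum_add_distrib]
  congr 1
  have : ∀ j ∈ Finset.range t.sum,
      (if j = mp - 1 ∧ Multiset.card t ≤ k then 1 else 0)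
      = if j = mp - 1 then (if Multiset.card t ≤ k then 1 else 0) else 0 := by
    intro j _
    by_cases h1 : j = mp - 1 <;> by_cases h2 : Multiset.card t ≤ k <;>
      simp [h1, h2]
  rw [Finset.sum_congr rfl this, Finset.sum_ite_eq' (Finset.range t.sum) (mp - 1)]
  rw [if_pos (Finset.mem_range.2 (by omega))]


/-! ### The symplectic collapse, explicitly -/

open Classical in
/-- Correction term: positions where the partial sum must be decremented. -/
noncomputable def delta (y : Multiset ℕ) (k : ℕ) : ℕ :=
  if Odd (psum y k) ∧ ¬(rowF y (k - 1) = rowF y k ∧ Odd (rowF y k)) then 1 else 0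

/-- Row function of the symplectic collapse of `y`. -/
noncomputable def gfun (y : Multiset ℕ) (i : ℕ) : ℕ :=
  rowF y i + delta y i - delta y (i + 1)

/-- The symplectic collapse of `y`. -/
noncomputable def scol (y : Multiset ℕ) : Multiset ℕ :=
  mkPart (gfun y) (Multiset.card y)

lemma delta_le_one (y : Multiset ℕ) (k : ℕ) : delta y k ≤ 1 := by
  rw [delta]; split_ifs <;> omega

lemma delta_zero (y : Multiset ℕ) : delta y 0 = 0 := by
  rw [delta, if_neg]
  rintro ⟨h1, -⟩
  rw [psum_zero'] at h1
  simp at h1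

lemma delta_eq_zero_of_even (y : Multiset ℕ) {k : ℕ} (h : ¬ Odd (psum y k)) :
    delta y k = 0 := by
  rw [delta, if_neg]
  rintro ⟨h1, -⟩
  exact h h1

lemma delta_eq_zero_of_ge {y : Multiset ℕ} (hev : Even y.sum) {k : ℕ}
    (h : Multiset.card y ≤ k) : delta y k = 0 := by
  apply delta_eq_zero_of_even
  rw [psum_stab y h]
  exact Nat.not_odd_iff_even.mpr hev

lemma delta_step (y : Multiset ℕ) (k : ℕ) : delta y (k + 1) ≤ rowF y k + delta y k := by
  have hd1 := delta_le_one y (k + 1)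
  rcases Nat.eq_zero_or_pos (delta y (k + 1)) with h|h
  · omega
  · have hcond : Odd (psum y (k + 1)) := by
      by_contra hc
      rw [delta_eq_zero_of_even y hc] at h
      omega
    rcases Nat.eq_zero_or_pos (rowF y k) with hw|hw
    · rcases Nat.eq_zero_or_pos (delta y k) with hd|hd
      · exfalso
        have h1 : Odd (psum y k) := by
          have := psum_succ y k
          rw [hw] at this
          rw [show psum y (k + 1) = psum y k by omega] at hcond
          exact hcond
        have h2 : delta y k = 1 := by
          rw [delta, if_pos]
          constructor
          · exact h1
          · rintro ⟨-, hodd⟩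
            rw [hw] at hodd
            simp at hodd
        omega
      · omega
    · omega


lemma delta_eq_one_iff (y : Multiset ℕ) (k : ℕ) :
    delta y k = 1 ↔
      (Odd (psum y k) ∧ ¬(rowF y (k - 1) = rowF y k ∧ Odd (rowF y k))) := by
  rw [delta]
  split_ifs with h
  · exact iff_of_true rfl h
  · exact iff_of_false (by simp) h

lemma key_ineq (y : Multiset ℕ) (i : ℕ) :
    rowF y (i + 1) + 2 * delta y (i + 1) ≤ rowF y i + delta y i + delta y (i + 2) := by
  have hanti : rowF y (i + 1) ≤ rowF y i := rowF_antitone y (by omega)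
  rcases Nat.eq_zero_or_pos (delta y (i + 1)) with hd|hd
  · have := delta_le_one y (i + 2)
    omega
  · have hd1 : delta y (i + 1) = 1 := by have := delta_le_one y (i + 1); omega
    obtain ⟨hodd, hncond⟩ := (delta_eq_one_iff y (i + 1)).mp hd1
    rw [show i + 1 - 1 = i by omega] at hncond
    set w0 := rowF y i with hw0
    set w1 := rowF y (i + 1) with hw1
    have hps1 : psum y (i + 1) = psum y i + w0 := psum_succ y i
    have hps2 : psum y (i + 2) = psum y (i + 1) + w1 := psum_succ y (i + 1)
    rcases le_or_gt (w1 + 2) w0 with hA|hA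
    · have := delta_le_one y i
      have := delta_le_one y (i + 2)
      omega
    · -- w0 = w1 or w0 = w1 + 1
      rcases Nat.even_or_odd w1 with hw1e|hw1o
      · -- w1 even: delta (i+2) = 1
        have hnext : delta y (i + 2) = 1 := by
          rw [delta_eq_one_iff]
          constructor
          · rw [hps2, Nat.odd_iff] at *
            rcases hw1e with ⟨v, hv⟩
            omega
          · rw [show i + 2 - 1 = i + 1 by omega]
            rintro ⟨he, ho⟩
            rw [← he] at ho
            rw [Nat.odd_iff] at ho
            rcases hw1e with ⟨v, hv⟩
            omega
        -- also, if w0 = w1, need delta i = 1 as well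
        rcases Nat.eq_or_lt_of_le hanti with heq|hlt
        · -- w1 = w0
          have hw0e : Even w0 := by rcases hw1e with ⟨v,hv⟩; exact ⟨v, by omega⟩
          match i, hw0, hps1 with
          | 0, hw0, hps1 =>
            exfalso
            rw [psum_zero'] at hps1
            rw [hps1, Nat.odd_iff] at hodd
            rcases hw0e with ⟨v, hv⟩
            omega
          | (i' + 1), hw0, hps1 =>
            have hdi : delta y (i' + 1) = 1 := by
              rw [delta_eq_one_iff]
              constructor
              · rw [hps1] at hodd
                rw [Nat.odd_iff] at hodd ⊢
                rcases hw0e with ⟨v, hv⟩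
                omega
              · rintro ⟨-, ho⟩
                rw [← hw0, Nat.odd_iff] at ho
                rcases hw0e with ⟨v, hv⟩
                omega
            omega
        · omega
      · -- w1 odd: then (by hncond) w0 ≠ w1, so w0 = w1 + 1, even
        have hne : w0 ≠ w1 := by
          intro hc
          exact hncond ⟨hc, hw1o⟩
        have hw0v : w0 = w1 + 1 := by omega
        have hw0e : Even w0 := by
          rcases hw1o with ⟨v, hv⟩
          exact ⟨v + 1, by omega⟩
        match i, hw0, hps1 with
        | 0, hw0, hps1 =>
          exfalso
          rw [psum_zero'] at hps1
          rw [hps1, Nat.odd_iff] at hodd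
          rcases hw0e with ⟨v, hv⟩
          omega
        | (i' + 1), hw0, hps1 =>
          have hdi : delta y (i' + 1) = 1 := by
            rw [delta_eq_one_iff]
            constructor
            · rw [hps1] at hodd
              rw [Nat.odd_iff] at hodd ⊢
              rcases hw0e with ⟨v, hv⟩
              omega
            · rintro ⟨-, ho⟩
              rw [← hw0, Nat.odd_iff] at ho
              rcases hw0e with ⟨v, hv⟩
              omega
          have := delta_le_one y (i' + 1 + 2)
          omega

lemma gfun_succ_le (y : Multiset ℕ) (i : ℕ) : gfun y (i + 1) ≤ gfun y i := by
  have hkey := key_ineq y i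
  have hs1 := delta_step y i
  have hs2 := delta_step y (i + 1)
  rw [gfun, gfun]
  have he : delta y (i + 1 + 1) = delta y (i + 2) := rfl
  omega

lemma gfun_antitone (y : Multiset ℕ) : ∀ {a b : ℕ}, a ≤ b → gfun y b ≤ gfun y a :=
  fun hab => antitone_nat_of_succ_le (gfun_succ_le y) hab

lemma gfun_vanish {y : Multiset ℕ} (hev : Even y.sum) :
    ∀ i, Multiset.card y ≤ i → gfun y i = 0 := by
  intro i hi
  rw [gfun, rowF_eq_zero hi, delta_eq_zero_of_ge hev hi,
    delta_eq_zero_of_ge hev (by omega)]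

lemma rowF_scol {y : Multiset ℕ} (hev : Even y.sum) (i : ℕ) :
    rowF (scol y) i = gfun y i :=
  rowF_mkPart (fun hab => gfun_antitone y hab) (gfun_vanish hev) i

lemma psum_scol {y : Multiset ℕ} (hev : Even y.sum) (k : ℕ) :
    psum (scol y) k + delta y k = psum y k := by
  induction k with
  | zero => rw [psum_zero', psum_zero', delta_zero]
  | succ k ih =>
    have h1 := psum_succ (scol y) k
    have h2 := psum_succ y k
    have h3 := rowF_scol hev k
    have h4 := delta_step y k
    rw [gfun] at h3
    omega

lemma zero_not_mem_scol (y : Multiset ℕ) : 0 ∉ scol y :=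
  zero_not_mem_mkPart _ _

lemma sum_scol {y : Multiset ℕ} (hev : Even y.sum) : (scol y).sum = y.sum := by
  have hcard : Multiset.card (scol y) ≤ Multiset.card y := by
    rw [scol, mkPart]
    calc Multiset.card (((Multiset.range (Multiset.card y)).map (gfun y)).filter (0 < ·))
        ≤ Multiset.card ((Multiset.range (Multiset.card y)).map (gfun y)) :=
          Multiset.card_le_card (Multiset.filter_le _ _)
      _ = Multiset.card y := by rw [Multiset.card_map, Multiset.card_range]
  have h1 : psum (scol y) (Multiset.card y) = (scol y).sum := psum_stab _ hcard
  have h2 := psum_scol hev (Multiset.card y)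
  rw [psum_stab y le_rfl, delta_eq_zero_of_ge hev le_rfl] at h2
  omega

lemma symplectic_scol {y : Multiset ℕ} (hev : Even y.sum) : IsSymplectic (scol y) := by
  apply sympChar_mpr (zero_not_mem_scol y)
  intro k hodd
  have hps := psum_scol hev k
  have hdk : delta y k = 0 := by
    by_contra hc
    have hd1 : delta y k = 1 := by have := delta_le_one y k; omega
    have hoddy : Odd (psum y k) := ((delta_eq_one_iff y k).mp hd1).1
    rw [Nat.odd_iff] at hodd hoddy
    omega
  have hoddy : Odd (psum y k) := by rw [hdk] at hps; rw [← hps] at *; exact hodd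
  have hcond : rowF y (k - 1) = rowF y k ∧ Odd (rowF y k) := by
    by_contra hc
    have : delta y k = 1 := (delta_eq_one_iff y k).mpr ⟨hoddy, hc⟩
    omega
  have hk1 : 1 ≤ k := by
    rcases Nat.eq_zero_or_pos k with h|h
    · rw [h, psum_zero'] at hoddy; exact absurd hoddy (by simp)
    · exact h
  obtain ⟨k', rfl⟩ : ∃ k', k = k' + 1 := ⟨k - 1, by omega⟩
  rw [show k' + 1 - 1 = k' by omega] at hcond ⊢
  rw [rowF_scol hev, rowF_scol hev, gfun, gfun]
  have hd2 : delta y (k' + 2) = 0 := by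
    apply delta_eq_zero_of_even
    have e := psum_succ y (k' + 1)
    have e2 : psum y (k' + 1 + 1) = psum y (k' + 2) := rfl
    have h2 := hcond.2
    rw [Nat.odd_iff] at h2 hoddy
    rw [Nat.odd_iff]
    omega
  have hd0 : delta y k' = 0 := by
    apply delta_eq_zero_of_even
    have e := psum_succ y k'
    have h2 := hcond.2
    rw [Nat.odd_iff] at h2 hoddy
    rw [hcond.1] at e
    rw [Nat.odd_iff]
    omega
  rw [hd2, hd0, hcond.1, hdk]

lemma domLE_scol {y : Multiset ℕ} (hev : Even y.sum) : DomLE (scol y) y := by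
  intro k
  have := psum_scol hev k
  omega

lemma scol_max {y : Multiset ℕ} (hev : Even y.sum) (q' : Multiset ℕ)
    (hq' : IsPartitionOf y.sum q') (hsym : IsSymplectic q') (hle : DomLE q' y) :
    DomLE q' (scol y) := by
  intro k
  have hps := psum_scol hev k
  rcases Nat.eq_zero_or_pos (delta y k) with hd|hd
  · have := hle k
    omega
  · have hd1 : delta y k = 1 := by have := delta_le_one y k; omega
    obtain ⟨hodd, hncond⟩ := (delta_eq_one_iff y k).mp hd1
    by_contra hc
    have heq : psum q' k = psum y k := by
      have := hle k
      omega
    have hoddq : Odd (psum q' k) := heq ▸ hodd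
    have hk1 : 1 ≤ k := by
      rcases Nat.eq_zero_or_pos k with h|h
      · rw [h, psum_zero'] at hoddq; exact absurd hoddq (by simp)
      · exact h
    have hevq : Even q'.sum := by rw [hq'.1]; exact hev
    obtain ⟨hrow, hoddm⟩ := sympChar_mp hsym hevq k hoddq
    obtain ⟨k', rfl⟩ : ∃ k', k = k' + 1 := ⟨k - 1, by omega⟩
    rw [show k' + 1 - 1 = k' by omega] at hrow hncond
    have hm1 : rowF y k' ≤ rowF q' k' := by
      have e1 := psum_succ q' k'
      have e2 := psum_succ y k'
      have := hle k'
      omega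
    have hm2 : rowF q' (k' + 1) ≤ rowF y (k' + 1) := by
      have e1 := psum_succ q' (k' + 1)
      have e2 := psum_succ y (k' + 1)
      have e3 : psum y (k' + 1 + 1) = psum y (k' + 2) := rfl
      have e4 : psum q' (k' + 1 + 1) = psum q' (k' + 2) := rfl
      have := hle (k' + 2)
      omega
    have hanti : rowF y (k' + 1) ≤ rowF y k' := rowF_antitone y (by omega)
    apply hncond
    constructor
    · omega
    · rw [show rowF y (k' + 1) = rowF q' (k' + 1) by omega]
      exact hoddm

theorem scol_isCollapse {y : Multiset ℕ} (h0 : 0 ∉ y) (hev : Even y.sum) :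
    IsCollapseOf IsSymplectic y.sum y (scol y) :=
  ⟨⟨sum_scol hev, zero_not_mem_scol y⟩, symplectic_scol hev, domLE_scol hev,
    fun q' hq' hsym hle => scol_max hev q' hq' hsym hle⟩

lemma sympCollapse_of_symplectic {N : ℕ} {z : Multiset ℕ}
    (hz : IsPartitionOf N z) (hsym : IsSymplectic z) : sympCollapse N z = z := by
  have hex : IsCollapseOf IsSymplectic N z z :=
    ⟨hz, hsym, domLE_refl z, fun q' _ _ h => h⟩
  have hE : ∃ q, IsCollapseOf IsSymplectic N z q := ⟨z, hex⟩
  rw [sympCollapse, collapseOf, dif_pos hE]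
  have hspec := hE.choose_spec
  exact domLE_antisymm hspec.1.2 hz.2 hspec.2.2.1 (hspec.2.2.2 z hz hsym (domLE_refl z))


/-! ### Parity facts for orthogonal partitions -/

lemma sum_mod_two (p : Multiset ℕ) :
    p.sum % 2 = Multiset.countP (fun a => Odd a) p % 2 := by
  induction p using Multiset.induction with
  | empty => simp
  | cons a s ih =>
    rw [Multiset.sum_cons, Multiset.countP_cons]
    by_cases h : Odd a
    · rw [if_pos h]
      rw [Nat.odd_iff] at h
      omega
    · rw [if_neg h]
      rw [Nat.odd_iff] at h
      omega

lemma even_card_of_even_counts {m : Multiset ℕ} (h : ∀ a, Even (m.count a)) :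
    Even (Multiset.card m) := by
  rw [← Multiset.toFinset_sum_count_eq]
  apply Finset.even_sum
  intro a _
  exact h a

lemma countP_even_even {p : Multiset ℕ} (horth : IsOrthogonal p) :
    Even (Multiset.countP (fun a => Even a) p) := by
  rw [Multiset.countP_eq_card_filter]
  apply even_card_of_even_counts
  intro a
  rw [Multiset.count_filter]
  by_cases h : Even a
  · rw [if_pos h]; exact horth a h
  · rw [if_neg h]; exact Even.zero

lemma card_odd_of_orth {p : Multiset ℕ} (horth : IsOrthogonal p)
    (hodds : p.sum % 2 = 1) : Multiset.card p % 2 = 1 := by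
  have h1 : Multiset.card p = Multiset.countP (fun a => Odd a) p
      + Multiset.countP (fun a => Even a) p := by
    have hff : Multiset.filter (fun a => ¬ Odd a) p = Multiset.filter (fun a => Even a) p :=
      Multiset.filter_congr (fun a _ => Nat.not_odd_iff_even)
    have hf := Multiset.filter_add_not (fun a => Odd a) p
    rw [Multiset.countP_eq_card_filter, Multiset.countP_eq_card_filter, ← hff,
      ← Multiset.card_add, hf]
  have h2 := sum_mod_two p
  have h3 := countP_even_even horth
  rcases h3 with ⟨x, hx⟩
  omega

lemma colF_zero_odd {p : Multiset ℕ} (hp0 : 0 ∉ p) (horth : IsOrthogonal p)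
    (hodds : p.sum % 2 = 1) : colF p 0 % 2 = 1 := by
  rw [colF_zero_eq_card hp0]
  exact card_odd_of_orth horth hodds

lemma colF_pair_parity {p : Multiset ℕ} (horth : IsOrthogonal p) {j : ℕ}
    (hj : j % 2 = 1) : colF p j % 2 = colF p (j + 1) % 2 := by
  have h1 := colF_succ p j
  have h2 : Even (p.count (j + 1)) := horth (j + 1) (by
    rcases Nat.even_or_odd (j + 1) with h|h
    · exact h
    · rw [Nat.odd_iff] at h; omega)
  rcases h2 with ⟨x, hx⟩
  omega

lemma psum_transpose_odd {p : Multiset ℕ} (hp0 : 0 ∉ p) (horth : IsOrthogonal p)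
    (hodds : p.sum % 2 = 1) :
    ∀ k, k % 2 = 1 → psum (transpose p) k % 2 = 1 := by
  intro k
  induction k using Nat.strong_induction_on with
  | _ k IH =>
    intro hk
    match k, hk with
    | 1, hk =>
      have e1 := psum_succ (transpose p) 0
      rw [psum_zero', rowF_transpose] at e1
      have e2 : psum (transpose p) (0 + 1) = psum (transpose p) 1 := rfl
      have hP1 := colF_zero_odd hp0 horth hodds
      omega
    | (k'' + 2), hk =>
      have ih := IH k'' (by omega) (by omega)
      have e1 := psum_succ (transpose p) k''
      have e2 := psum_succ (transpose p) (k'' + 1)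
      rw [rowF_transpose] at e1 e2
      have hP2 := colF_pair_parity horth (p := p) (j := k'') (by omega)
      have e3 : psum (transpose p) (k'' + 1 + 1) = psum (transpose p) (k'' + 2) := rfl
      omega

/-! ### The collapse of `(p^t)^-` has symplectic transpose -/

lemma transpose_scol_symplectic {p : Multiset ℕ} (hp0 : 0 ∉ p)
    (hodds : p.sum % 2 = 1) (horth : IsOrthogonal p) :
    IsSymplectic (transpose (scol (pMinus (transpose p)))) := by
  set t := transpose p with ht
  have h0t : 0 ∉ t := zero_not_mem_transpose p
  have htsum : t.sum = p.sum := sum_transpose p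
  have hnet : t ≠ 0 := by
    intro hc
    rw [hc] at htsum
    simp at htsum
    omega
  set y := pMinus t with hy
  have hy0 : 0 ∉ y := zero_not_mem_pMinus t
  have hysum : y.sum + 1 = t.sum := sum_pMinus h0t hnet
  have hev : Even y.sum := by
    rw [Nat.even_iff]
    omega
  set l := Multiset.card t with hl
  have hl1 : 1 ≤ l := card_pos_of_ne hnet
  -- row function of y vs columns of p
  have hw : ∀ i, rowF y i + (if i = l - 1 then 1 else 0) = colF p i := by
    intro i
    have e1 := psum_pMinus h0t hnet i
    have e2 := psum_pMinus h0t hnet (i + 1)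
    rw [← hy] at e1 e2
    have e3 := psum_succ y i
    have e4 := psum_succ t i
    have e5 := rowF_transpose p i
    rw [← ht] at e5
    by_cases hil : i = l - 1
    · rw [if_pos hil]
      rw [if_neg (show ¬ (Multiset.card t ≤ i) by omega)] at e1
      rw [if_pos (show Multiset.card t ≤ i + 1 by omega)] at e2
      omega
    · rw [if_neg hil]
      rcases le_or_gt l i with hc|hc
      · rw [if_pos (show Multiset.card t ≤ i by omega)] at e1
        rw [if_pos (show Multiset.card t ≤ i + 1 by omega)] at e2
        omega
      · rw [if_neg (show ¬ (Multiset.card t ≤ i) by omega)] at e1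
        rw [if_neg (show ¬ (Multiset.card t ≤ i + 1) by omega)] at e2
        omega
  have hw_ge : ∀ i, l ≤ i → rowF y i = 0 := by
    intro i hi
    have h1 := hw i
    have h2 := (rowF_transpose p i).symm
    rw [← ht] at h2
    have h3 : rowF t i = 0 := rowF_eq_zero (by omega)
    rw [if_neg (by omega)] at h1
    omega
  have hδge : ∀ k, l ≤ k → delta y k = 0 := by
    intro k hk
    apply delta_eq_zero_of_even
    have e1 := psum_pMinus h0t hnet k
    rw [← hy] at e1
    rw [if_pos (by omega)] at e1
    rw [psum_stab t (by omega)] at e1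
    rw [Nat.odd_iff]
    omega
  have hδeven : ∀ k, 2 ≤ k → k % 2 = 0 → k < l →
      delta y k = (rowF y (k - 1) + 1) % 2 := by
    intro k h2k hk0 hkl
    obtain ⟨k', rfl⟩ : ∃ k', k = k' + 1 := ⟨k - 1, by omega⟩
    rw [show k' + 1 - 1 = k' by omega]
    have e1 := psum_pMinus h0t hnet (k' + 1)
    rw [← hy] at e1
    rw [if_neg (by omega)] at e1
    have e2 := psum_succ t k'
    have hF1 := psum_transpose_odd hp0 horth hodds k' (by omega)
    rw [← ht] at hF1
    have e3 : rowF t k' = colF p k' := rowF_transpose p k'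
    have e4 := hw k'
    rw [if_neg (by omega)] at e4
    rcases Nat.even_or_odd (rowF y k') with hpar|hpar
    · rw [Nat.even_iff] at hpar
      have : delta y (k' + 1) = 1 := by
        rw [delta_eq_one_iff]
        constructor
        · rw [Nat.odd_iff]
          omega
        · rw [show k' + 1 - 1 = k' by omega]
          rintro ⟨he, ho⟩
          rw [← he, Nat.odd_iff] at ho
          omega
      omega
    · rw [Nat.odd_iff] at hpar
      have : delta y (k' + 1) = 0 := by
        apply delta_eq_zero_of_even
        rw [Nat.odd_iff]
        omega
      omega
  -- main goal
  intro a ha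
  have ha1 : 1 ≤ a := by
    rcases Nat.eq_zero_or_pos a with h|h
    · rw [h] at ha; exact absurd ha (by simp)
    · exact h
  obtain ⟨j, rfl⟩ : ∃ j, a = j + 1 := ⟨a - 1, by omega⟩
  have hj2 : j % 2 = 0 := by rw [Nat.odd_iff] at ha; omega
  have hct := count_transpose (scol y) j
  have hg0 := rowF_scol hev j
  have hg1 := rowF_scol hev (j + 1)
  suffices hMAIN : (rowF y j + rowF y (j + 1) + delta y j + delta y (j + 2)) % 2 = 0 by
    have hgj : gfun y j = rowF y j + delta y j - delta y (j + 1) := rfl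
    have hgj1 : gfun y (j + 1) = rowF y (j + 1) + delta y (j + 1) - delta y (j + 2) := rfl
    have hs1 := delta_step y j
    have hs2 := delta_step y (j + 1)
    have hee : delta y (j + 1 + 1) = delta y (j + 2) := rfl
    rw [Nat.even_iff]
    omega
  by_cases hD : l ≤ j
  · rw [hw_ge j hD, hw_ge (j + 1) (by omega), hδge j hD, hδge (j + 2) (by omega)]
  · push_neg at hD
    have hb1 := hw j
    have hb2 := hw (j + 1)
    by_cases hC : l = j + 1
    · -- j = l - 1, l odd
      rw [if_pos (by omega)] at hb1
      rw [if_neg (by omega)] at hb2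
      have hw1 : rowF y (j + 1) = 0 := hw_ge (j + 1) (by omega)
      have hδ2 : delta y (j + 2) = 0 := hδge (j + 2) (by omega)
      by_cases hj0 : j = 0
      · subst hj0
        have hδ0 := delta_zero y
        have hP1 := colF_zero_odd hp0 horth hodds
        omega
      · have hδj := hδeven j (by omega) hj2 (by omega)
        have hbm := hw (j - 1)
        rw [if_neg (by omega)] at hbm
        have hP2 := colF_pair_parity horth (p := p) (j := j - 1) (by omega)
        rw [show j - 1 + 1 = j by omega] at hP2
        omega
    · by_cases hB : l = j + 2
      · -- j + 1 = l - 1, l even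
        rw [if_neg (by omega)] at hb1
        rw [if_pos (by omega)] at hb2
        have hδ2 : delta y (j + 2) = 0 := hδge (j + 2) (by omega)
        have hctop : colF p (j + 1) % 2 = 0 := by
          have h1 := colF_succ p (j + 1)
          have h2 := (rowF_transpose p (j + 2)).symm
          rw [← ht] at h2
          have h3 : rowF t (j + 2) = 0 := rowF_eq_zero (by omega)
          have h4 : Even (p.count (j + 2)) := horth (j + 2) (by
            rcases Nat.even_or_odd (j + 2) with h|h
            · exact h
            · rw [Nat.odd_iff] at h; omega)
          rcases h4 with ⟨x, hx⟩
          have h5 : colF p (j + 1 + 1) = colF p (j + 2) := rfl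
          have h6 : p.count (j + 1 + 1) = p.count (j + 2) := rfl
          omega
        by_cases hj0 : j = 0
        · subst hj0
          have hδ0 := delta_zero y
          have hP1 := colF_zero_odd hp0 horth hodds
          omega
        · have hδj := hδeven j (by omega) hj2 (by omega)
          have hbm := hw (j - 1)
          rw [if_neg (by omega)] at hbm
          have hP2 := colF_pair_parity horth (p := p) (j := j - 1) (by omega)
          rw [show j - 1 + 1 = j by omega] at hP2
          omega
      · -- j + 2 < l
        have hA : j + 2 < l := by omega
        rw [if_neg (by omega)] at hb1
        rw [if_neg (by omega)] at hb2
        have hδ2 := hδeven (j + 2) (by omega) (by omega) hA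
        rw [show j + 2 - 1 = j + 1 by omega] at hδ2
        by_cases hj0 : j = 0
        · subst hj0
          have hδ0 := delta_zero y
          have hP1 := colF_zero_odd hp0 horth hodds
          omega
        · have hδj := hδeven j (by omega) hj2 (by omega)
          have hbm := hw (j - 1)
          rw [if_neg (by omega)] at hbm
          have hP2 := colF_pair_parity horth (p := p) (j := j - 1) (by omega)
          rw [show j - 1 + 1 = j by omega] at hP2
          omega


/-! ### Facts about `[p₁ p₁ (2n*)]` -/

lemma sum_map_add' (s : Multiset ℕ) (f g : ℕ → ℕ) :
    (s.map (fun a => f a + g a)).sum = (s.map f).sum + (s.map g).sum := by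
  induction s using Multiset.induction with
  | empty => simp
  | cons a u ih => simp [ih]; omega

lemma sum_map_indicator (s : Multiset ℕ) (C : ℕ → Prop) [DecidablePred C] :
    (s.map (fun a => if C a then 1 else 0)).sum = Multiset.countP C s := by
  induction s using Multiset.induction with
  | empty => simp
  | cons a u ih =>
    rw [Multiset.map_cons, Multiset.sum_cons, Multiset.countP_cons, ih]
    omega

lemma sum_map_scaled_indicator (s : Multiset ℕ) (C : ℕ → Prop) [DecidablePred C] (e : ℕ) :
    (s.map (fun a => if C a then e else 0)).sum = e * Multiset.countP C s := by
  induction s using Multiset.induction with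
  | empty => simp
  | cons a u ih =>
    rw [Multiset.map_cons, Multiset.sum_cons, Multiset.countP_cons, ih, Nat.mul_add]
    split_ifs <;> omega

lemma countP_split (s : Multiset ℕ) (P Q : ℕ → Prop) [DecidablePred P] [DecidablePred Q] :
    Multiset.countP P s = Multiset.countP (fun a => P a ∧ Q a) s
      + Multiset.countP (fun a => P a ∧ ¬ Q a) s := by
  induction s using Multiset.induction with
  | empty => simp
  | cons a u ih =>
    rw [Multiset.countP_cons, Multiset.countP_cons, Multiset.countP_cons, ih]
    by_cases h1 : P a <;> by_cases h2 : Q a <;>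
      simp [h1, h2] <;> omega

lemma countP_le_pred (s : Multiset ℕ) (P Q : ℕ → Prop) [DecidablePred P] [DecidablePred Q]
    (h : ∀ a ∈ s, P a → Q a) : Multiset.countP P s ≤ Multiset.countP Q s := by
  induction s using Multiset.induction with
  | empty => simp
  | cons a u ih =>
    rw [Multiset.countP_cons, Multiset.countP_cons]
    have ih' := ih (fun a ha hP => h a (Multiset.mem_cons_of_mem ha) hP)
    by_cases h1 : P a
    · rw [if_pos h1, if_pos (h a (Multiset.mem_cons_self a u) h1)]
      omega
    · rw [if_neg h1]
      split_ifs <;> omega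

lemma part_le_max {p : Multiset ℕ} (hp0 : 0 ∉ p) {a : ℕ} (ha : a ∈ p) :
    a ≤ rowF p 0 := by
  have ha1 : 1 ≤ a := by
    rcases Nat.eq_zero_or_pos a with h|h
    · exact absurd (h ▸ ha) hp0
    · exact h
  have hc : 1 ≤ p.count a := Multiset.count_pos.2 ha
  have h1 := colF_succ p (a - 1)
  rw [show a - 1 + 1 = a by omega] at h1
  have h2 := (adj p 0 (a - 1)).mp (by omega)
  omega

lemma sum_halves (p : Multiset ℕ) :
    p.sum = 2 * (p.map (fun a => a / 2)).sum + Multiset.countP (fun a => Odd a) p := by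
  induction p using Multiset.induction with
  | empty => simp
  | cons a u ih =>
    rw [Multiset.sum_cons, Multiset.map_cons, Multiset.sum_cons, Multiset.countP_cons, ih]
    by_cases h : Odd a
    · rw [if_pos h]
      rw [Nat.odd_iff] at h
      omega
    · rw [if_neg h]
      rw [Nat.odd_iff] at h
      omega

lemma psum_pOne (p : Multiset ℕ) (j : ℕ) :
    psum (pOne p) j = (p.map (fun a => min (a / 2) j)).sum := by
  rw [pOne, sum_min_transpose, Multiset.map_map]
  rfl

lemma sum_pOne (p : Multiset ℕ) : (pOne p).sum = (p.map (fun a => a / 2)).sum := by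
  rw [pOne, sum_transpose]

lemma cnt_odd_parity {N : ℕ} {p : Multiset ℕ} (hp : IsPartitionOf (2 * N + 1) p) :
    Multiset.countP (fun a => Odd a) p % 2 = 1 := by
  have h1 := sum_mod_two p
  have h2 := hp.1
  omega

lemma nStar_eq {N : ℕ} {p : Multiset ℕ} (hp : IsPartitionOf (2 * N + 1) p) :
    2 * nStar p + 1 = Multiset.countP (fun a => Odd a) p := by
  have := cnt_odd_parity hp
  rw [nStar]
  have he : p.countP (Odd ·) = Multiset.countP (fun a => Odd a) p := rfl
  rw [he]
  omega

lemma x_partition {N : ℕ} {p : Multiset ℕ} (hp : IsPartitionOf (2 * N + 1) p) :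
    IsPartitionOf (2 * N) (qqm (pOne p) (2 * nStar p)) := by
  have hns := nStar_eq hp
  have hsh := sum_halves p
  have hsp := hp.1
  have h0p1 : 0 ∉ pOne p := zero_not_mem_transpose _
  constructor
  · by_cases hm : 2 * nStar p = 0
    · rw [qqm, if_pos hm, Multiset.sum_add, sum_pOne]
      omega
    · rw [qqm, if_neg hm, Multiset.sum_cons, Multiset.sum_add, sum_pOne]
      omega
  · by_cases hm : 2 * nStar p = 0
    · rw [qqm, if_pos hm]
      intro hc
      rcases Multiset.mem_add.1 hc with h|h
      · exact h0p1 h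
      · exact h0p1 h
    · rw [qqm, if_neg hm]
      intro hc
      rcases Multiset.mem_cons.1 hc with h|h
      · exact hm h.symm
      · rcases Multiset.mem_add.1 h with h'|h'
        · exact h0p1 h'
        · exact h0p1 h'

lemma x_symplectic (p : Multiset ℕ) : IsSymplectic (qqm (pOne p) (2 * nStar p)) := by
  intro a ha
  by_cases hm : 2 * nStar p = 0
  · rw [qqm, if_pos hm, Multiset.count_add]
    exact ⟨_, rfl⟩
  · rw [qqm, if_neg hm, Multiset.count_cons, Multiset.count_add]
    rw [if_neg (by
      intro hc
      rw [Nat.odd_iff] at ha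
      omega)]
    exact ⟨Multiset.count a (pOne p), by omega⟩

lemma final_bound {p : Multiset ℕ} (hp0 : 0 ∉ p) (hsum : p.sum % 2 = 1)
    (k j₁ j₂ e : ℕ) (hj : j₁ + j₂ + e ≤ k) (he : e ≤ 1) :
    (p.map (fun a => min (a / 2) j₁)).sum + (p.map (fun a => min (a / 2) j₂)).sum
      + e * (Multiset.countP (fun a => Odd a) p - 1)
      + (if rowF p 0 ≤ k then 1 else 0)
    ≤ (p.map (fun a => min a k)).sum := by
  have hcnt1 : Multiset.countP (fun a => Odd a) p % 2 = 1 := by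
    have := sum_mod_two p
    omega
  have hsplit := countP_split p (fun a => Odd a) (fun a => a ≤ k)
  have hmono : Multiset.countP (fun a => Odd a ∧ ¬ (a ≤ k)) p
      ≤ Multiset.countP (fun a => k + 1 ≤ a) p :=
    countP_le_pred p _ _ (fun a _ h => by omega)
  have hcase : ∀ (ind2 : ℕ → ℕ), (∀ a ∈ p, ind2 a = if k + 1 ≤ a then e else 0) →
      (p.map (fun a => (min (a / 2) j₁ + min (a / 2) j₂)
        + ((if Odd a ∧ a ≤ k then 1 else 0) + ind2 a))).sum
      ≤ (p.map (fun a => min a k)).sum := by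
    intro ind2 hind2
    apply Multiset.sum_map_le_sum_map
    intro a ha
    rw [hind2 a ha]
    by_cases h1 : Odd a ∧ a ≤ k
    · rw [if_pos h1]
      have h1' := h1.1
      rw [Nat.odd_iff] at h1'
      have h1'' := h1.2
      by_cases h2 : k + 1 ≤ a
      · omega
      · rw [if_neg h2]
        simp only [Nat.min_def]
        split_ifs <;> omega
    · rw [if_neg h1]
      by_cases h2 : k + 1 ≤ a
      · rw [if_pos h2]
        simp only [Nat.min_def]
        split_ifs <;> omega
      · rw [if_neg h2]
        have h3 : ¬ (Odd a) ∨ ¬ (a ≤ k) := by tauto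
        have h4 : a % 2 = 0 ∨ ¬ (a ≤ k) := by
          rcases h3 with h|h
          · left; rw [Nat.odd_iff] at h; omega
          · right; exact h
        simp only [Nat.min_def]
        rcases h4 with h4|h4 <;> split_ifs <;> omega
  have hkey0 := hcase (fun a => if k + 1 ≤ a then e else 0) (fun a _ => rfl)
  have hkey : (p.map (fun a => (min (a / 2) j₁ + min (a / 2) j₂)
      + ((if Odd a ∧ a ≤ k then 1 else 0) + (if k + 1 ≤ a then e else 0)))).sum
      ≤ (p.map (fun a => min a k)).sum := hkey0
  rw [sum_map_add', sum_map_add', sum_map_add', sum_map_indicator] at hkey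
  have hind2sum := sum_map_scaled_indicator p (fun a => k + 1 ≤ a) e
  rw [hind2sum] at hkey
  have hz : rowF p 0 ≤ k → Multiset.countP (fun a => Odd a ∧ ¬ (a ≤ k)) p = 0 := by
    intro hk
    apply Multiset.countP_eq_zero.2
    intro a ha hcon
    have := part_le_max hp0 ha
    exact hcon.2 (by omega)
  rcases Nat.le_one_iff_eq_zero_or_eq_one.mp he with rfl|rfl
  · by_cases hk : rowF p 0 ≤ k
    · have hz' := hz hk
      rw [if_pos hk]
      omega
    · rw [if_neg hk]
      omega
  · by_cases hk : rowF p 0 ≤ k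
    · have hz' := hz hk
      rw [if_pos hk]
      omega
    · rw [if_neg hk]
      omega

lemma domLE_x_y {N : ℕ} {p : Multiset ℕ} (hp : IsPartitionOf (2 * N + 1) p) :
    DomLE (qqm (pOne p) (2 * nStar p)) (pMinus (transpose p)) := by
  have hp0 := hp.2
  have hpsum := hp.1
  have h0t : 0 ∉ transpose p := zero_not_mem_transpose p
  have htne : transpose p ≠ 0 := by
    intro hc
    have h := sum_transpose p
    rw [hc] at h
    simp at h
    omega
  have hx := x_partition hp
  have hx0 := hx.2
  have hns := nStar_eq hp
  intro k
  have hpm := psum_pMinus h0t htne k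
  have hT := sum_min_transpose p k
  have hcardt : Multiset.card (transpose p) = rowF p 0 :=
    (colF_zero_eq_card h0t).symm.trans (colF_transpose p 0)
  obtain ⟨s, hsle, hscard, hssum⟩ :=
    exists_topk (qqm (pOne p) (2 * nStar p)) hx0 k
  obtain ⟨K, e, hKe, he1, hbound⟩ : ∃ K e, K + e ≤ k ∧ e ≤ 1 ∧
      psum (qqm (pOne p) (2 * nStar p)) k
        ≤ psum (pOne p) ((K + 1) / 2) + psum (pOne p) (K / 2) + e * (2 * nStar p) := by
    by_cases hm : 2 * nStar p = 0
    · rw [qqm, if_pos hm] at hsle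
      obtain ⟨s₁, s₂, h1, h2, rfl⟩ := decomp_le_add hsle
      rw [Multiset.card_add] at hscard
      refine ⟨Multiset.card s₁ + Multiset.card s₂, 0, by omega, by omega, ?_⟩
      have b1 : s₁.sum ≤ psum (pOne p) (Multiset.card s₁) := sub_sum_le_psum h1 le_rfl
      have b2 : s₂.sum ≤ psum (pOne p) (Multiset.card s₂) := sub_sum_le_psum h2 le_rfl
      have bal := psum_balance (pOne p) (Multiset.card s₁) (Multiset.card s₂)
      rw [Multiset.sum_add] at hssum
      omega
    · rw [qqm, if_neg hm, ← Multiset.singleton_add] at hsle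
      obtain ⟨s₀, s₁₂, h0, h12, rfl⟩ := decomp_le_add hsle
      obtain ⟨s₁, s₂, h1, h2, rfl⟩ := decomp_le_add h12
      have b1 : s₁.sum ≤ psum (pOne p) (Multiset.card s₁) := sub_sum_le_psum h1 le_rfl
      have b2 : s₂.sum ≤ psum (pOne p) (Multiset.card s₂) := sub_sum_le_psum h2 le_rfl
      have bal := psum_balance (pOne p) (Multiset.card s₁) (Multiset.card s₂)
      rw [Multiset.card_add, Multiset.card_add] at hscard
      rw [Multiset.sum_add, Multiset.sum_add] at hssum
      rcases Multiset.le_singleton.mp h0 with rfl|rfl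
      · refine ⟨Multiset.card s₁ + Multiset.card s₂, 0, by simp at hscard; omega,
          by omega, ?_⟩
        simp at hssum
        omega
      · refine ⟨Multiset.card s₁ + Multiset.card s₂, 1, by simp at hscard; omega,
          le_rfl, ?_⟩
        simp at hssum
        omega
  have hfin := final_bound hp0 (by omega) k ((K + 1) / 2) (K / 2) e (by omega) he1
  rw [psum_pOne, psum_pOne] at hbound
  have hite : (if Multiset.card (transpose p) ≤ k then 1 else 0)
      = (if rowF p 0 ≤ k then 1 else 0) := by rw [hcardt]
  rcases Nat.le_one_iff_eq_zero_or_eq_one.mp he1 with rfl|rfl <;> omega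

end PartitionAux


/-- Proposition 4.4, case `G_n = Sp_{2n}`: for an orthogonal partition `p`
of `2n+1`, `[p₁ p₁ (2n*)]^{Sp_{2n}} ≤ ((p^t)^-)_{Sp_{2n}}` in the dominance order. -/
theorem expansion_le_bv_dual_sp (n : ℕ) (p : Multiset ℕ)
    (hp : IsPartitionOf (2 * n + 1) p) (horth : IsOrthogonal p) :
    DomLE (sympExpansion (2 * n) (qqm (pOne p) (2 * nStar p)))
      (sympCollapse (2 * n) (pMinus (transpose p))) := by
  open PartitionAux in
  have hp0 := hp.2
  have hpsum := hp.1
  have hodds : p.sum % 2 = 1 := by omega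
  have h0t : 0 ∉ transpose p := zero_not_mem_transpose p
  have htne : transpose p ≠ 0 := by
    intro hc
    have h := sum_transpose p
    rw [hc] at h
    simp at h
    omega
  have hy0 : 0 ∉ pMinus (transpose p) := zero_not_mem_pMinus _
  have hysum : (pMinus (transpose p)).sum = 2 * n := by
    have h1 := sum_pMinus h0t htne
    have h2 := sum_transpose p
    omega
  have hyev : Even (pMinus (transpose p)).sum := ⟨n, by omega⟩
  have hcoll : IsCollapseOf IsSymplectic (2 * n) (pMinus (transpose p))
      (scol (pMinus (transpose p))) := by
    have h := scol_isCollapse hy0 hyev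
    rw [hysum] at h
    exact h
  have hcsum : (scol (pMinus (transpose p))).sum = 2 * n := hcoll.1.1
  have hc0 : 0 ∉ scol (pMinus (transpose p)) := hcoll.1.2
  have hcsym : IsSymplectic (scol (pMinus (transpose p))) := hcoll.2.1
  have hspec : IsSpecialSymp (2 * n) (scol (pMinus (transpose p))) := by
    rw [IsSpecialSymp]
    have htc_sym : IsSymplectic (transpose (scol (pMinus (transpose p)))) :=
      transpose_scol_symplectic hp0 hodds horth
    have htc_part : IsPartitionOf (2 * n) (transpose (scol (pMinus (transpose p)))) :=
      ⟨by rw [sum_transpose, hcsum], zero_not_mem_transpose _⟩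
    rw [sympCollapse_of_symplectic htc_part htc_sym, transpose_transpose hc0]
    exact sympCollapse_of_symplectic ⟨hcsum, hc0⟩ hcsym
  have hxpart : IsPartitionOf (2 * n) (qqm (pOne p) (2 * nStar p)) := x_partition hp
  have hxsym : IsSymplectic (qqm (pOne p) (2 * nStar p)) := x_symplectic p
  have hxy : DomLE (qqm (pOne p) (2 * nStar p)) (pMinus (transpose p)) := domLE_x_y hp
  have hxc : DomLE (qqm (pOne p) (2 * nStar p)) (scol (pMinus (transpose p))) :=
    hcoll.2.2.2 _ hxpart hxsym hxy
  by_cases hE : ∃ q, IsExpansionOf IsSymplectic (IsSpecialSymp (2 * n)) (2 * n)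
      (qqm (pOne p) (2 * nStar p)) q
  · rw [sympExpansion, expansionOf, dif_pos hE]
    have hspecE := hE.choose_spec
    have hEc : DomLE hE.choose (scol (pMinus (transpose p))) :=
      hspecE.2.2.2.2 _ hcoll.1 hcsym hspec hxc
    have hCE : ∃ q, IsCollapseOf IsSymplectic (2 * n) (pMinus (transpose p)) q :=
      ⟨_, hcoll⟩
    rw [sympCollapse, collapseOf, dif_pos hCE]
    have hspecC := hCE.choose_spec
    exact domLE_trans hEc (hspecC.2.2.2 _ hcoll.1 hcsym hcoll.2.2.1)
  · rw [sympExpansion, expansionOf, dif_neg hE]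
    intro k
    rw [psum_zero_part]
    exact Nat.zero_le _
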